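/- (Prism Condition.) Let n ≥ 1, let τ be an (n−1)-well-centered (n−1)-simplex in a Euclidean space, let u be a point not in the affine span of τ, and let σ = u∗τ. Let P(u) be the orthogonal projection of u onto the affine span of τ. If dist(u, c(τ)) > R(τ) (u lies strictly outside the equatorial ball of τ) and the reflection 2·c(τ) − P(u) of P(u) through c(τ) is a strictly positive affine combination of the vertices of τ (i.e., lies in the relative interior of τ), then σ is n-well-centered. -/

import Mathlib

open scoped RealInnerProductSpace
open Finset

variable {E : Type*} [NormedAddCommGroup E] [InnerProductSpace ℝ E]

/-- `x` is a strictly positive affine combination of the vertices of `s`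
(i.e. lies in the relative interior of `s`). -/
def Affine.Simplex.IsInteriorPoint {n : ℕ} (s : Affine.Simplex ℝ E n) (x : E) : Prop :=
  ∃ w : Fin (n + 1) → ℝ, (∑ i, w i) = 1 ∧ (∀ i, 0 < w i) ∧
    Finset.univ.affineCombination ℝ s.points w = x

/-- A simplex is well-centered if its circumcenter is a strictly positive affine
combination of its vertices. -/
def Affine.Simplex.IsWellCentered {n : ℕ} (s : Affine.Simplex ℝ E n) : Prop :=
  s.IsInteriorPoint s.circumcenter

/-- **Prism Condition**: let `τ` be an `(n−1)`-well-centered `(n−1)`-simplex and `u` a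
point outside the affine span of `τ`, and let `σ = u ∗ τ` be the cone.  If `u` lies
strictly outside the equatorial ball of `τ` and the reflection of the orthogonal
projection of `u` through the circumcenter of `τ` lies in the relative interior of `τ`,
then `σ` is `n`-well-centered. -/
theorem cone_isWellCentered_of_dist_gt_of_reflection_interior
    {n : ℕ} (τ : Affine.Simplex ℝ E n) (hτ : τ.IsWellCentered) (u : E)
    (hu : u ∉ affineSpan ℝ (Set.range τ.points))
    (σ : Affine.Simplex ℝ E (n + 1)) (hσ : σ.points = Fin.cons u τ.points)
    (hball : τ.circumradius < dist u τ.circumcenter)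
    (hrefl : τ.IsInteriorPoint
      ((2 : ℝ) • τ.circumcenter - (τ.orthogonalProjectionSpan u : E))) :
    σ.IsWellCentered := by
  classical
  obtain ⟨w, hw1, hwpos, hwc⟩ := hτ
  set c : E := τ.circumcenter with hc
  set P : E := (τ.orthogonalProjectionSpan u : E) with hPdef
  set d : E := u - P with hd
  set R : ℝ := τ.circumradius with hRdef
  have hPmem : P ∈ affineSpan ℝ (Set.range τ.points) := (τ.orthogonalProjectionSpan u).2
  obtain ⟨p, hp1, hPcomb⟩ := eq_affineCombination_of_mem_affineSpan_of_fintype hPmem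
  have hcmem : c ∈ affineSpan ℝ (Set.range τ.points) := τ.circumcenter_mem_affineSpan
  -- `d` is orthogonal to the direction of the affine span of `τ`
  have hdorth : d ∈ (affineSpan ℝ (Set.range τ.points)).directionᗮ := by
    simpa [hd, hPdef, vsub_eq_sub, Affine.Simplex.orthogonalProjectionSpan] using
      EuclideanGeometry.vsub_orthogonalProjection_mem_direction_orthogonal
        (affineSpan ℝ (Set.range τ.points)) u
  have hinner : ∀ v ∈ (affineSpan ℝ (Set.range τ.points)).direction, ⟪v, d⟫ = 0 :=
    (Submodule.mem_orthogonal _ d).1 hdorth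
  have hdne : d ≠ 0 := by
    intro h0
    apply hu
    have : u = P := by rwa [hd, sub_eq_zero] at h0
    rw [this]; exact hPmem
  have hdn : (0 : ℝ) < ‖d‖ := norm_pos_iff.2 hdne
  have hdn2 : (0 : ℝ) < ‖d‖ ^ 2 := by positivity
  -- Pythagoras helper
  have key : ∀ a : E, a ∈ (affineSpan ℝ (Set.range τ.points)).direction → ∀ t : ℝ,
      ‖a + t • d‖ ^ 2 = ‖a‖ ^ 2 + t ^ 2 * ‖d‖ ^ 2 := by
    intro a ha t
    have h0 : ⟪a, t • d⟫ = 0 := by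
      rw [real_inner_smul_right, hinner a ha, mul_zero]
    rw [norm_add_sq_real, h0, norm_smul]
    simp [mul_pow]
  have hmemv : ∀ i, τ.points i ∈ affineSpan ℝ (Set.range τ.points) := fun i =>
    mem_affineSpan ℝ (Set.mem_range_self i)
  -- distances
  have hvc : ∀ i, ‖τ.points i - c‖ = R := by
    intro i
    rw [← dist_eq_norm]
    exact τ.dist_circumcenter_eq_circumradius i
  have hPc : P - c ∈ (affineSpan ℝ (Set.range τ.points)).direction := by
    simpa [vsub_eq_sub] using AffineSubspace.vsub_mem_direction hPmem hcmem
  set ρ : ℝ := ‖P - c‖ with hρ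
  have hρ0 : 0 ≤ ρ := norm_nonneg _
  have hR0 : 0 ≤ R := τ.circumradius_nonneg
  -- dist u c squared
  have huc : ‖u - c‖ ^ 2 = ρ ^ 2 + ‖d‖ ^ 2 := by
    have : u - c = (P - c) + (1 : ℝ) • d := by
      rw [hd]; module
    rw [this, key _ hPc 1]; ring
  -- strict outside ball: numerator positive
  have hballn : R ^ 2 < ρ ^ 2 + ‖d‖ ^ 2 := by
    rw [← huc]
    have h1 : R < ‖u - c‖ := by rwa [← dist_eq_norm u c]
    have h2 : 0 ≤ ‖u - c‖ := norm_nonneg _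
    nlinarith
  -- reflection is in the circumball, so ρ ≤ R
  obtain ⟨r, hr1, hrpos, hrcomb⟩ := hrefl
  have hρR : ρ ≤ R := by
    have hy : ((2 : ℝ) • c - P) ∈ Metric.closedBall c R := by
      have hsub : Set.range τ.points ⊆ Metric.closedBall c R := by
        rintro - ⟨i, rfl⟩
        simp only [Metric.mem_closedBall]
        exact le_of_eq (τ.dist_circumcenter_eq_circumradius i)
      have hconv : convexHull ℝ (Set.range τ.points) ⊆ Metric.closedBall c R :=
        convexHull_min hsub (convex_closedBall c R)
      apply hconv
      rw [← hrcomb]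
      have := affineCombination_mem_convexHull (s := Finset.univ) (v := τ.points) (w := r)
        (fun i _ => (hrpos i).le) (by simpa using hr1)
      simpa using this
    have : dist ((2 : ℝ) • c - P) c ≤ R := Metric.mem_closedBall.1 hy
    have heq : dist ((2 : ℝ) • c - P) c = ρ := by
      rw [dist_eq_norm, hρ]
      have : (2 : ℝ) • c - P - c = -(P - c) := by
        rw [two_smul]; abel
      rw [this, norm_neg]
    linarith [heq ▸ this]
  -- barycentric coordinates of the reflection and uniqueness
  have hsum1 : ∑ i, (2 * w i - p i) = 1 := by
    rw [Finset.sum_sub_distrib, ← Finset.mul_sum, hw1, hp1]; ring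
  have hrefl_comb : Finset.univ.affineCombination ℝ τ.points (fun i => 2 * w i - p i)
      = (2 : ℝ) • c - P := by
    rw [affineCombination_eq_linear_combination _ _ _ hsum1]
    have hcl : c = ∑ i, w i • τ.points i := by
      rw [← hwc, affineCombination_eq_linear_combination _ _ _ hw1]
    have hPl : P = ∑ i, p i • τ.points i := by
      rw [hPcomb, affineCombination_eq_linear_combination _ _ _ hp1]
    rw [hcl, hPl, Finset.smul_sum, ← Finset.sum_sub_distrib]
    congr 1; ext i; module
  have hrw : ∀ i, r i = 2 * w i - p i := by
    have := τ.independent.indicator_eq_of_affineCombination_eq Finset.univ Finset.univ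
      r (fun i => 2 * w i - p i) hr1 hsum1
      (by rw [hrcomb, hrefl_comb])
    intro i
    have := congrFun this i
    simpa using this
  have hplt : ∀ i, p i < 2 * w i := by
    intro i
    have := hrpos i
    rw [hrw i] at this
    linarith
  -- the candidate circumcenter
  set s : ℝ := (‖d‖ ^ 2 + ρ ^ 2 - R ^ 2) / (2 * ‖d‖ ^ 2) with hs
  have hs_pos : 0 < s := by
    apply div_pos; · linarith
    · linarith
  have hs_half : s ≤ 1 / 2 := by
    rw [hs, div_le_div_iff₀ (by linarith) (by norm_num)]
    nlinarith
  set q : E := c + s • d with hq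
  -- the weight vector
  set W : Fin (n + 2) → ℝ := Fin.cons s (fun i => w i - s * p i) with hW
  have hWsum : ∑ i, W i = 1 := by
    rw [hW, Fin.sum_cons, Finset.sum_sub_distrib, ← Finset.mul_sum, hw1, hp1]
    ring
  have hWcomb : Finset.univ.affineCombination ℝ σ.points W = q := by
    rw [affineCombination_eq_linear_combination _ _ _ hWsum, hσ, hW]
    have : ∑ i : Fin (n + 2), (Fin.cons s (fun i => w i - s * p i) : Fin (n+2) → ℝ) i •
        (Fin.cons u τ.points : Fin (n+2) → E) i
        = s • u + ∑ i, (w i - s * p i) • τ.points i := by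
      rw [Fin.sum_univ_succ]; simp
    rw [this]
    have hcl : c = ∑ i, w i • τ.points i := by
      rw [← hwc, affineCombination_eq_linear_combination _ _ _ hw1]
    have hPl : P = ∑ i, p i • τ.points i := by
      rw [hPcomb, affineCombination_eq_linear_combination _ _ _ hp1]
    have hsum2 : ∑ i, (w i - s * p i) • τ.points i = c - s • P := by
      rw [hcl, hPl, Finset.smul_sum, ← Finset.sum_sub_distrib]
      congr 1; ext i; rw [sub_smul, mul_smul]
    rw [hsum2, hq, hd, smul_sub]; abel
  -- q is equidistant from all vertices of σ
  set rad : ℝ := Real.sqrt (R ^ 2 + s ^ 2 * ‖d‖ ^ 2) with hrad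
  have hrad_sq : rad ^ 2 = R ^ 2 + s ^ 2 * ‖d‖ ^ 2 := by
    rw [hrad, Real.sq_sqrt]; positivity
  have hsq_u : ‖u - q‖ ^ 2 = R ^ 2 + s ^ 2 * ‖d‖ ^ 2 := by
    have h1 : u - q = (P - c) + (1 - s) • d := by
      rw [hq, hd]; module
    rw [h1, key _ hPc (1 - s), ← hρ]
    have h2 : 2 * s * ‖d‖ ^ 2 = ‖d‖ ^ 2 + ρ ^ 2 - R ^ 2 := by
      rw [hs]; field_simp
    linear_combination -h2
  have hsq_v : ∀ i, ‖τ.points i - q‖ ^ 2 = R ^ 2 + s ^ 2 * ‖d‖ ^ 2 := by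
    intro i
    have h1 : τ.points i - q = (τ.points i - c) + (-s) • d := by
      rw [hq]; module
    have h2 : τ.points i - c ∈ (affineSpan ℝ (Set.range τ.points)).direction := by
      simpa [vsub_eq_sub] using AffineSubspace.vsub_mem_direction (hmemv i) hcmem
    rw [h1, key _ h2 (-s), hvc i]; ring
  have hdists : ∀ j, dist (σ.points j) q = rad := by
    intro j
    rw [dist_eq_norm, ← Real.sqrt_sq (norm_nonneg (σ.points j - q)), hrad]
    congr 1
    refine Fin.cases ?_ ?_ j
    · rw [hσ]; simpa using hsq_u
    · intro i; rw [hσ]; simpa using hsq_v i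
  have hqmem : q ∈ affineSpan ℝ (Set.range σ.points) := by
    rw [← hWcomb]; exact affineCombination_mem_affineSpan hWsum σ.points
  have hq_eq : q = σ.circumcenter := σ.eq_circumcenter_of_dist_eq hqmem hdists
  refine ⟨W, hWsum, ?_, by rw [hWcomb, hq_eq]⟩
  intro j
  refine Fin.cases ?_ ?_ j
  · simpa [hW] using hs_pos
  · intro i
    simp only [hW, Fin.cons_succ]
    rcases le_or_gt 0 (p i) with hpi | hpi
    · have h3 : s * p i ≤ (1 / 2) * p i := mul_le_mul_of_nonneg_right hs_half hpi
      have h4 := hplt i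
      linarith
    · have h3 : s * p i < 0 := mul_neg_of_pos_of_neg hs_pos hpi
      have h4 := hwpos i
      linarith
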